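/- Let I : ℝ → ℝ be a differentiable positive function and let c > 0, μ₃ > 0, d > 0 with c·I'(ς) = d(I(ς+1) - 2I(ς) + I(ς-1)) + q(ς)·I(ς) - μ₃·I(ς) for all ς, where q(ς) ≥ 0. Set κ = (2d + μ₃)/c. Then the function U(ς) = e^{κς}·I(ς) satisfies U'(ς) > 0 for all ς; in particular I(ς-1)/I(ς) < e^κ for all ς. -/

import Mathlib

theorem stmt_12 (c d μ₃ : ℝ) (hc : 0 < c) (hd : 0 < d) (hμ : 0 < μ₃)
    (I q : ℝ → ℝ) (hI : Differentiable ℝ I) (hIpos : ∀ ς, 0 < I ς)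
    (hq : ∀ ς, 0 ≤ q ς)
    (heq : ∀ ς, c * deriv I ς =
      d * (I (ς + 1) - 2 * I ς + I (ς - 1)) + q ς * I ς - μ₃ * I ς)
    (κ : ℝ) (hκ : κ = (2 * d + μ₃) / c) :
    (∀ ς, 0 < deriv (fun s => Real.exp (κ * s) * I s) ς) ∧
    StrictMono (fun s => Real.exp (κ * s) * I s) ∧
    (∀ ς, I (ς - 1) / I ς < Real.exp κ) := by
  have hderiv : ∀ ς, deriv (fun s => Real.exp (κ * s) * I s) ς
      = Real.exp (κ * ς) * (κ * I ς + deriv I ς) := by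
    intro ς
    have h1 : HasDerivAt (fun s => Real.exp (κ * s)) (κ * Real.exp (κ * ς)) ς := by
      have := (Real.hasDerivAt_exp (κ * ς)).comp ς ((hasDerivAt_id ς).const_mul κ)
      simpa [mul_comm, Function.comp_def] using this
    have h2 : HasDerivAt I (deriv I ς) ς := (hI ς).hasDerivAt
    have := h1.mul h2
    rw [show (fun s => Real.exp (κ * s) * I s) = (fun s => Real.exp (κ * s)) * I from rfl, this.deriv]; ring
  have hpos : ∀ ς, 0 < deriv (fun s => Real.exp (κ * s) * I s) ς := by
    intro ς
    rw [hderiv ς]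
    have hκc : κ * c = 2 * d + μ₃ := by
      rw [hκ]; field_simp
    have hd2 : c * (κ * I ς + deriv I ς)
        = d * (I (ς + 1) + I (ς - 1)) + q ς * I ς := by
      linear_combination heq ς + I ς * hκc
    have hrhs : 0 < d * (I (ς + 1) + I (ς - 1)) + q ς * I ς := by
      have := hIpos (ς + 1); have := hIpos (ς - 1); have := hIpos ς
      nlinarith [hq ς]
    have : 0 < κ * I ς + deriv I ς := by
      nlinarith
    positivity
  have hmono : StrictMono (fun s => Real.exp (κ * s) * I s) := by
    apply strictMono_of_deriv_pos hpos
  refine ⟨hpos, hmono, ?_⟩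
  intro ς
  have h := hmono (show ς - 1 < ς by linarith)
  simp only at h
  rw [div_lt_iff₀ (hIpos ς)]
  have hE : Real.exp (κ * ς) = Real.exp (κ * (ς - 1)) * Real.exp κ := by
    rw [← Real.exp_add]; ring_nf
  rw [hE] at h
  have hEpos := Real.exp_pos (κ * (ς - 1))
  nlinarith [hIpos ς, hIpos (ς - 1)]
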